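/- Let W and W' be real symmetric n×n matrices and D and D' diagonal n×n matrices with positive diagonal entries. Suppose every diagonal entry of D is at least d_min > 0, every diagonal entry of D' is at least d_min/2, ‖D' − D‖₂ ≤ ε, ‖W' − W‖₂ ≤ ε, and ‖W‖₂ ≤ d_max, where ‖·‖₂ is the operator norm. Then the normalized Laplacians 𝓛 = I − D^{−1/2} W D^{−1/2} and 𝓛' = I − (D')^{−1/2} W' (D')^{−1/2} satisfy ‖𝓛' − 𝓛‖₂ ≤ ε ( 2/d_min + (2 + √2) d_max / d_min² ). -/

import Mathlib

/-- The operator (spectral) norm of a real matrix: the norm of the induced continuous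
linear endomorphism of Euclidean space. -/
noncomputable def opNorm {n : ℕ} (A : Matrix (Fin n) (Fin n) ℝ) : ℝ :=
  ‖Matrix.toEuclideanCLM (𝕜 := ℝ) A‖

lemma clm_apply {n : ℕ} (A : Matrix (Fin n) (Fin n) ℝ) (x : EuclideanSpace ℝ (Fin n)) (i : Fin n) :
    (Matrix.toEuclideanCLM (𝕜 := ℝ) A x) i = A.mulVec x i := by
  have h := congrFun (Matrix.ofLp_toEuclideanCLM A x) i
  simpa [Matrix.toLin'_apply] using h

lemma euclid_coord_le {n : ℕ} (y : EuclideanSpace ℝ (Fin n)) (i : Fin n) : |y i| ≤ ‖y‖ := by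
  rw [EuclideanSpace.norm_eq]
  calc |y i| = Real.sqrt (‖y i‖ ^ 2) := by
        rw [Real.norm_eq_abs, Real.sqrt_sq (abs_nonneg _)]
    _ ≤ _ := by
        apply Real.sqrt_le_sqrt
        exact Finset.single_le_sum (f := fun j => ‖y j‖ ^ 2) (fun j _ => by positivity)
          (Finset.mem_univ i)

lemma opNorm_nonneg' {n : ℕ} (A : Matrix (Fin n) (Fin n) ℝ) : 0 ≤ opNorm A := norm_nonneg _

lemma opNorm_neg' {n : ℕ} (A : Matrix (Fin n) (Fin n) ℝ) : opNorm (-A) = opNorm A := by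
  unfold opNorm; rw [map_neg, norm_neg]

lemma opNorm_add_le' {n : ℕ} (A B : Matrix (Fin n) (Fin n) ℝ) :
    opNorm (A + B) ≤ opNorm A + opNorm B := by
  unfold opNorm; rw [map_add]; exact norm_add_le _ _

lemma opNorm_mul_le' {n : ℕ} (A B : Matrix (Fin n) (Fin n) ℝ) :
    opNorm (A * B) ≤ opNorm A * opNorm B := by
  unfold opNorm; rw [map_mul]; exact norm_mul_le _ _

lemma opNorm_mul3_le {n : ℕ} (A B C : Matrix (Fin n) (Fin n) ℝ) (a b c : ℝ)
    (ha : opNorm A ≤ a) (hb : opNorm B ≤ b) (hc : opNorm C ≤ c)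
    (ha0 : 0 ≤ a) (hb0 : 0 ≤ b) (hc0 : 0 ≤ c) :
    opNorm (A * B * C) ≤ a * b * c := by
  calc opNorm (A * B * C) ≤ opNorm (A * B) * opNorm C := opNorm_mul_le' _ _
    _ ≤ (a * b) * c := by
        apply mul_le_mul _ hc (opNorm_nonneg' _) (by positivity)
        calc opNorm (A * B) ≤ opNorm A * opNorm B := opNorm_mul_le' _ _
          _ ≤ a * b := mul_le_mul ha hb (opNorm_nonneg' _) ha0
    _ = a * b * c := rfl

lemma opNorm_diag_le {n : ℕ} (v : Fin n → ℝ) (c : ℝ) (hc : 0 ≤ c) (h : ∀ i, |v i| ≤ c) :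
    opNorm (Matrix.diagonal v) ≤ c := by
  apply ContinuousLinearMap.opNorm_le_bound _ hc
  intro x
  rw [EuclideanSpace.norm_eq, EuclideanSpace.norm_eq, ← Real.sqrt_sq hc,
    ← Real.sqrt_mul (by positivity)]
  apply Real.sqrt_le_sqrt
  rw [Finset.mul_sum]
  apply Finset.sum_le_sum
  intro i _
  rw [clm_apply, Matrix.mulVec_diagonal, Real.norm_eq_abs, Real.norm_eq_abs, abs_mul, mul_pow]
  have h1 : |v i| ^ 2 ≤ c ^ 2 := by
    apply sq_le_sq' <;> nlinarith [abs_nonneg (v i), h i]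
  nlinarith [sq_nonneg |x i|, sq_nonneg (v i)]

lemma abs_le_opNorm_diag {n : ℕ} (v : Fin n → ℝ) (i : Fin n) :
    |v i| ≤ opNorm (Matrix.diagonal v) := by
  set f := Matrix.toEuclideanCLM (𝕜 := ℝ) (Matrix.diagonal v)
  have h1 : ‖f (EuclideanSpace.single i (1:ℝ))‖ ≤ ‖f‖ := by
    calc ‖f (EuclideanSpace.single i (1:ℝ))‖ ≤ ‖f‖ * ‖EuclideanSpace.single i (1:ℝ)‖ :=
          f.le_opNorm _
      _ = ‖f‖ := by rw [EuclideanSpace.norm_single, norm_one, mul_one]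
  refine le_trans ?_ h1
  have h2 : (f (EuclideanSpace.single i (1:ℝ))) i = v i := by
    rw [clm_apply, Matrix.mulVec_diagonal]
    simp [EuclideanSpace.single_apply]
  calc |v i| = |(f (EuclideanSpace.single i (1:ℝ))) i| := by rw [h2]
    _ ≤ ‖f (EuclideanSpace.single i (1:ℝ))‖ := euclid_coord_le _ i

set_option maxHeartbeats 1000000 in
/-- **Perturbation bound for the normalized Laplacian.**
If `W, W'` are symmetric, `D, D'` diagonal with positive diagonals, all diagonal entries
of `D` at least `d_min` and of `D'` at least `d_min/2`, `‖D' − D‖₂ ≤ ε`, `‖W' − W‖₂ ≤ ε`,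
and `‖W‖₂ ≤ d_max`, then the normalized Laplacians satisfy
`‖𝓛' − 𝓛‖₂ ≤ ε (2/d_min + (2 + √2) d_max / d_min²)`. -/
theorem normalized_laplacian_perturbation
    (n : ℕ)
    (W W' : Matrix (Fin n) (Fin n) ℝ)
    (hW : W.IsSymm) (hW' : W'.IsSymm)
    (d d' : Fin n → ℝ)
    (hdpos : ∀ i, 0 < d i) (hd'pos : ∀ i, 0 < d' i)
    (dmin dmax ε : ℝ) (hdmin : 0 < dmin) (hε : 0 ≤ ε)
    (hd : ∀ i, dmin ≤ d i) (hd' : ∀ i, dmin / 2 ≤ d' i)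
    (hD : opNorm (Matrix.diagonal d' - Matrix.diagonal d) ≤ ε)
    (hWpert : opNorm (W' - W) ≤ ε)
    (hWnorm : opNorm W ≤ dmax) :
    opNorm
        ((1 - Matrix.diagonal (fun i => (Real.sqrt (d' i))⁻¹) * W' *
            Matrix.diagonal (fun i => (Real.sqrt (d' i))⁻¹)) -
          (1 - Matrix.diagonal (fun i => (Real.sqrt (d i))⁻¹) * W *
            Matrix.diagonal (fun i => (Real.sqrt (d i))⁻¹))) ≤
      ε * (2 / dmin + (2 + Real.sqrt 2) * dmax / dmin ^ 2) := by
  set S := Matrix.diagonal (fun i => (Real.sqrt (d i))⁻¹) with hS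
  set S' := Matrix.diagonal (fun i => (Real.sqrt (d' i))⁻¹) with hS'
  set s := Real.sqrt dmin with hsdef
  have hs : 0 < s := Real.sqrt_pos.mpr hdmin
  have hs2 : s ^ 2 = dmin := Real.sq_sqrt hdmin.le
  set r2 := Real.sqrt 2 with hr2def
  have hr2 : r2 ^ 2 = 2 := Real.sq_sqrt (by norm_num)
  have hr2p : 0 < r2 := Real.sqrt_pos.mpr (by norm_num)
  have hdmax : 0 ≤ dmax := le_trans (opNorm_nonneg' W) hWnorm
  -- entrywise perturbation bound on d
  have hεi : ∀ i, |d' i - d i| ≤ ε := by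
    intro i
    have := abs_le_opNorm_diag (fun j => d' j - d j) i
    rw [← Matrix.diagonal_sub] at this
    exact this.trans hD
  -- bounds on diagonal square roots
  have hsa : ∀ i, s ≤ Real.sqrt (d i) := fun i => Real.sqrt_le_sqrt (hd i)
  have hsap : ∀ i, 0 < Real.sqrt (d i) := fun i => Real.sqrt_pos.mpr (hdpos i)
  have hsbp : ∀ i, 0 < Real.sqrt (d' i) := fun i => Real.sqrt_pos.mpr (hd'pos i)
  have hsb : ∀ i, s ≤ r2 * Real.sqrt (d' i) := by
    intro i
    rw [hr2def, ← Real.sqrt_mul (by norm_num : (0:ℝ) ≤ 2)]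
    apply Real.sqrt_le_sqrt
    linarith [hd' i]
  have h2 : r2 * r2 = 2 := by rw [← hr2]; ring
  -- norm bounds on S, S'
  have bS : opNorm S ≤ s⁻¹ := by
    apply opNorm_diag_le _ _ (inv_nonneg.mpr hs.le)
    intro i
    rw [abs_of_pos (inv_pos.mpr (hsap i))]
    exact inv_anti₀ hs (hsa i)
  have bS' : opNorm S' ≤ r2 * s⁻¹ := by
    apply opNorm_diag_le _ _ (mul_nonneg hr2p.le (inv_nonneg.mpr hs.le))
    intro i
    rw [abs_of_pos (inv_pos.mpr (hsbp i))]
    have : r2 * s⁻¹ = r2 / s := by ring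
    rw [this, inv_eq_one_div, div_le_div_iff₀ (hsbp i) hs]
    calc 1 * s = s := one_mul s
      _ ≤ r2 * Real.sqrt (d' i) := hsb i
  -- bound on S' - S
  have hc0 : 0 ≤ r2 * ε / (dmin * s) :=
    div_nonneg (mul_nonneg hr2p.le hε) (mul_pos hdmin hs).le
  have bdiff : opNorm (S' - S) ≤ r2 * ε / (dmin * s) := by
    rw [hS, hS', Matrix.diagonal_sub]
    apply opNorm_diag_le _ _ hc0
    intro i
    set sa := Real.sqrt (d i) with hsadef
    set sb := Real.sqrt (d' i) with hsbdef
    have hsa2 : sa ^ 2 = d i := Real.sq_sqrt (hdpos i).le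
    have hsb2 : sb ^ 2 = d' i := Real.sq_sqrt (hd'pos i).le
    have hap := hsap i
    have hbp := hsbp i
    have hpos : (0:ℝ) < sa * sb * (sa + sb) :=
      mul_pos (mul_pos hap hbp) (add_pos hap hbp)
    have key : sb⁻¹ - sa⁻¹ = (d i - d' i) / (sa * sb * (sa + sb)) := by
      rw [eq_div_iff hpos.ne']
      have e1 : sb * sb⁻¹ = 1 := mul_inv_cancel₀ hbp.ne'
      have e2 : sa * sa⁻¹ = 1 := mul_inv_cancel₀ hap.ne'
      linear_combination sa * (sa + sb) * e1 - sb * (sa + sb) * e2 + hsa2 - hsb2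
    rw [key, abs_div, abs_of_pos hpos]
    have hden : dmin * s / r2 ≤ sa * sb * (sa + sb) := by
      have h1 : s / r2 ≤ sb := by
        rw [div_le_iff₀ hr2p]
        linarith [hsb i]
      have h2' : s ≤ sa + sb := by linarith [hsa i, hbp]
      calc dmin * s / r2 = s * (s / r2) * s := by
            rw [← hs2]; ring
        _ ≤ sa * sb * (sa + sb) := by
            apply mul_le_mul _ h2' hs.le (mul_nonneg hap.le hbp.le)
            apply mul_le_mul (hsa i) h1 (div_nonneg hs.le hr2p.le) hap.le
    have habs : |d i - d' i| ≤ ε := by rw [abs_sub_comm]; exact hεi i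
    calc |d i - d' i| / (sa * sb * (sa + sb)) ≤ |d i - d' i| / (dmin * s / r2) := by
          apply div_le_div_of_nonneg_left (abs_nonneg _) _ hden
          positivity
      _ = r2 * |d i - d' i| / (dmin * s) := by
          field_simp
      _ ≤ r2 * ε / (dmin * s) := by
          apply div_le_div_of_nonneg_right _ (mul_pos hdmin hs).le
          nlinarith [habs]
  -- decomposition
  have hexp : (1 - S' * W' * S') - (1 - S * W * S) =
      -(S' * (W' - W) * S' + (S' - S) * W * S' + S * W * (S' - S)) := by
    noncomm_ring
  rw [hexp, opNorm_neg']
  have hb1 : (0:ℝ) ≤ r2 * s⁻¹ := mul_nonneg hr2p.le (inv_nonneg.mpr hs.le)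
  have hb2 : (0:ℝ) ≤ s⁻¹ := inv_nonneg.mpr hs.le
  have t1 : opNorm (S' * (W' - W) * S') ≤ (r2 * s⁻¹) * ε * (r2 * s⁻¹) :=
    opNorm_mul3_le _ _ _ _ _ _ bS' hWpert bS' hb1 hε hb1
  have t2 : opNorm ((S' - S) * W * S') ≤ (r2 * ε / (dmin * s)) * dmax * (r2 * s⁻¹) :=
    opNorm_mul3_le _ _ _ _ _ _ bdiff hWnorm bS' hc0 hdmax hb1
  have t3 : opNorm (S * W * (S' - S)) ≤ s⁻¹ * dmax * (r2 * ε / (dmin * s)) :=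
    opNorm_mul3_le _ _ _ _ _ _ bS hWnorm bdiff hb2 hdmax hc0
  have hadd : opNorm (S' * (W' - W) * S' + (S' - S) * W * S' + S * W * (S' - S)) ≤
      (r2 * s⁻¹) * ε * (r2 * s⁻¹) + (r2 * ε / (dmin * s)) * dmax * (r2 * s⁻¹) +
        s⁻¹ * dmax * (r2 * ε / (dmin * s)) := by
    calc opNorm (S' * (W' - W) * S' + (S' - S) * W * S' + S * W * (S' - S))
        ≤ opNorm (S' * (W' - W) * S' + (S' - S) * W * S') + opNorm (S * W * (S' - S)) :=
          opNorm_add_le' _ _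
      _ ≤ (opNorm (S' * (W' - W) * S') + opNorm ((S' - S) * W * S')) +
            opNorm (S * W * (S' - S)) := by
          linarith [opNorm_add_le' (S' * (W' - W) * S') ((S' - S) * W * S')]
      _ ≤ _ := by linarith
  refine hadd.trans (le_of_eq ?_)
  have hsne : s ≠ 0 := hs.ne'
  have hdminne : dmin ≠ 0 := hdmin.ne'
  rw [← hs2]
  field_simp
  linear_combination (ε * s ^ 2 + ε * dmax) * hr2
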